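/- Let c ∈ ℝ and for integers n ≥ 1 define ψ_n(x) := (n² + c²)^{−1/2} √(2/π) (n cos(nx) + c sin(nx)) on [0,π]. Then ψ_n satisfies −ψ_n''(x) + c² ψ_n(x) = (n² + c²) ψ_n(x) for all x ∈ [0,π], together with the Robin boundary conditions ψ_n'(0) − c ψ_n(0) = 0 and ψ_n'(π) − c ψ_n(π) = 0. -/

import Mathlib

noncomputable section

/-- The Robin eigenfunctions `ψ_n = (n²+c²)^{-1/2} A φ_n^D` on `[0,π]`. -/
def robinEigen (c : ℝ) (n : ℕ) (x : ℝ) : ℝ :=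
  (Real.sqrt ((n : ℝ) ^ 2 + c ^ 2))⁻¹ * Real.sqrt (2 / Real.pi) *
    ((n : ℝ) * Real.cos ((n : ℝ) * x) + c * Real.sin ((n : ℝ) * x))

lemma robinEigen_hasDerivAt (c : ℝ) (n : ℕ) (x : ℝ) :
    HasDerivAt (robinEigen c n)
      ((Real.sqrt ((n : ℝ) ^ 2 + c ^ 2))⁻¹ * Real.sqrt (2 / Real.pi) *
        (c * n * Real.cos ((n : ℝ) * x) - (n : ℝ) ^ 2 * Real.sin ((n : ℝ) * x))) x := by
  have h1 : HasDerivAt (fun y : ℝ => (n : ℝ) * y) (n : ℝ) x := by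
    simpa using (hasDerivAt_id x).const_mul (n : ℝ)
  have hcos := (Real.hasDerivAt_cos ((n : ℝ) * x)).comp x h1
  have hsin := (Real.hasDerivAt_sin ((n : ℝ) * x)).comp x h1
  have := ((hcos.const_mul (n : ℝ)).add (hsin.const_mul c)).const_mul
    ((Real.sqrt ((n : ℝ) ^ 2 + c ^ 2))⁻¹ * Real.sqrt (2 / Real.pi))
  simp only [Function.comp_apply, Pi.add_apply] at this
  exact this.congr_deriv (by ring)

lemma robinEigen_deriv (c : ℝ) (n : ℕ) :
    deriv (robinEigen c n) = fun x =>
      (Real.sqrt ((n : ℝ) ^ 2 + c ^ 2))⁻¹ * Real.sqrt (2 / Real.pi) *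
        (c * n * Real.cos ((n : ℝ) * x) - (n : ℝ) ^ 2 * Real.sin ((n : ℝ) * x)) :=
  funext fun x => (robinEigen_hasDerivAt c n x).deriv

lemma robinEigen_deriv2 (c : ℝ) (n : ℕ) (x : ℝ) :
    deriv (deriv (robinEigen c n)) x = -(n : ℝ) ^ 2 * robinEigen c n x := by
  rw [robinEigen_deriv]
  have h1 : HasDerivAt (fun y : ℝ => (n : ℝ) * y) (n : ℝ) x := by
    simpa using (hasDerivAt_id x).const_mul (n : ℝ)
  have hcos := (Real.hasDerivAt_cos ((n : ℝ) * x)).comp x h1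
  have hsin := (Real.hasDerivAt_sin ((n : ℝ) * x)).comp x h1
  have h := ((hcos.const_mul (c * n)).sub (hsin.const_mul ((n : ℝ) ^ 2))).const_mul
    ((Real.sqrt ((n : ℝ) ^ 2 + c ^ 2))⁻¹ * Real.sqrt (2 / Real.pi))
  simp only [Function.comp, Pi.sub_apply] at h
  rw [h.deriv]
  simp only [robinEigen]
  ring

theorem robinEigen_eigenfunction (c : ℝ) (n : ℕ) (hn : 1 ≤ n) :
    (∀ x ∈ Set.Icc (0 : ℝ) Real.pi,
      -(deriv (deriv (robinEigen c n)) x) + c ^ 2 * robinEigen c n x =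
        ((n : ℝ) ^ 2 + c ^ 2) * robinEigen c n x) ∧
    deriv (robinEigen c n) 0 - c * robinEigen c n 0 = 0 ∧
    deriv (robinEigen c n) Real.pi - c * robinEigen c n Real.pi = 0 := by
  refine ⟨fun x _ => ?_, ?_, ?_⟩
  · rw [robinEigen_deriv2]; ring
  · rw [robinEigen_deriv]
    simp [robinEigen]
    ring
  · rw [robinEigen_deriv]
    simp [robinEigen, Real.sin_nat_mul_pi]
    ring
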